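/- Let K be irreducible, aperiodic, substochastic on countable S. Suppose the Yaglom limit K^n(x,y)/K^n(x,S) → π_x(y) holds for every x ∈ S, and the Jacka–Roberts limit ĥ(y) = lim_n K^n(y,S)/K^n(x₀,S) exists for all y for a fixed reference state x₀. Then ĥ is strictly positive and ρ-superharmonic: ∑_z K(x,z) ĥ(z) ≤ ρ ĥ(x) for all x. -/

import Mathlib

open Filter Topology

open scoped Classical in
/-- Matrix powers of a kernel `K` on a countable state space. -/
noncomputable def Kpow {S : Type*} (K : S → S → ℝ) : ℕ → S → S → ℝ
  | 0 => fun x y => if x = y then 1 else 0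
  | n + 1 => fun x y => ∑' z, Kpow K n x z * K z y

open scoped Classical

set_option linter.unusedSectionVars false
set_option linter.unusedVariables false
set_option maxHeartbeats 1000000

section YLHelpers

variable {S : Type*} [Countable S] (K : S → S → ℝ)

lemma YLsucc (n : ℕ) (x y : S) : Kpow K (n + 1) x y = ∑' z, Kpow K n x z * K z y := rfl

lemma YLnonneg (hnn : ∀ x y, 0 ≤ K x y) : ∀ (n : ℕ) (x y : S), 0 ≤ Kpow K n x y := by
  intro n
  induction n with
  | zero => intro x y; show (0:ℝ) ≤ if x = y then 1 else 0; split <;> norm_num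
  | succ n ih => intro x y; exact tsum_nonneg fun z => mul_nonneg (ih x z) (hnn z y)

lemma YLone (x y : S) : Kpow K 1 x y = K x y := by
  rw [YLsucc]
  rw [tsum_eq_single x (fun b hb => by
    have : Kpow K 0 x b = 0 := by
      show (if x = b then (1:ℝ) else 0) = 0
      rw [if_neg (fun h => hb h.symm)]
    rw [this, zero_mul])]
  have : Kpow K 0 x x = 1 := by
    show (if x = x then (1:ℝ) else 0) = 1
    rw [if_pos rfl]
  rw [this, one_mul]

lemma YLsummable_of_pos {f : S → ℝ} (h : 0 < ∑' y, f y) : Summable f := by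
  by_contra hs
  rw [tsum_eq_zero_of_not_summable hs] at h
  exact lt_irrefl 0 h

lemma YLexists_pos {f : S → ℝ} (hf : ∀ y, 0 ≤ f y) (h : 0 < ∑' y, f y) : ∃ y, 0 < f y := by
  by_contra hno
  push_neg at hno
  have h0 : ∀ y, f y = 0 := fun y => le_antisymm (hno y) (hf y)
  rw [show f = fun _ => (0:ℝ) from funext h0, tsum_zero] at h
  exact lt_irrefl 0 h

lemma YLmul_pos {u v : ℝ} (hu : 0 ≤ u) (hv : 0 ≤ v) (h : 0 < u * v) : 0 < u ∧ 0 < v := by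
  constructor
  · rcases hu.eq_or_lt with h'|h'
    · rw [← h', zero_mul] at h; exact absurd h (lt_irrefl 0)
    · exact h'
  · rcases hv.eq_or_lt with h'|h'
    · rw [← h', mul_zero] at h; exact absurd h (lt_irrefl 0)
    · exact h'

/-- Reachability via positive one-step transitions. -/
def YLReach (a b : S) : Prop := Relation.ReflTransGen (fun u v => 0 < K u v) a b

lemma YLreach_of_kpow (hnn : ∀ x y, 0 ≤ K x y) :
    ∀ (n : ℕ) (a b : S), 0 < Kpow K n a b → YLReach K a b := by
  intro n
  induction n with
  | zero =>
    intro a b h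
    by_cases hab : a = b
    · subst hab; exact Relation.ReflTransGen.refl
    · exfalso
      have : Kpow K 0 a b = 0 := by show (if a = b then (1:ℝ) else 0) = 0; rw [if_neg hab]
      rw [this] at h; exact lt_irrefl 0 h
  | succ n ih =>
    intro a b h
    rw [YLsucc] at h
    obtain ⟨v, hv⟩ := YLexists_pos (fun v => mul_nonneg (YLnonneg K hnn n a v) (hnn v b)) h
    obtain ⟨h1, h2⟩ := YLmul_pos (YLnonneg K hnn n a v) (hnn v b) hv
    exact Relation.ReflTransGen.tail (ih a v h1) h2

lemma YLpos_evt (hnn : ∀ x y, 0 ≤ K x y) {ρ : ℝ} (hρpos : 0 < ρ) {x y : S}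
    (h : Tendsto (fun n : ℕ => (Kpow K n x y) ^ ((n : ℝ)⁻¹)) atTop (𝓝 ρ)) :
    ∀ᶠ n in atTop, 0 < Kpow K n x y := by
  have h1 : ∀ᶠ n : ℕ in atTop, ρ/2 < (Kpow K n x y) ^ ((n : ℝ)⁻¹) :=
    h.eventually (eventually_gt_nhds (by linarith))
  have h2 : ∀ᶠ n : ℕ in atTop, 1 ≤ n := eventually_ge_atTop 1
  filter_upwards [h1, h2] with n hn1 hn2
  rcases (YLnonneg K hnn n x y).eq_or_lt with h0|h0
  · exfalso
    rw [← h0, Real.zero_rpow (inv_ne_zero (Nat.cast_ne_zero.2 (by omega)))] at hn1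
    linarith
  · exact h0

lemma YLupper_evt (hnn : ∀ x y, 0 ≤ K x y) {ρ q : ℝ} (hq : ρ < q) {x y : S}
    (h : Tendsto (fun n : ℕ => (Kpow K n x y) ^ ((n : ℝ)⁻¹)) atTop (𝓝 ρ)) :
    ∀ᶠ n in atTop, Kpow K n x y ≤ q ^ n := by
  have h1 : ∀ᶠ n : ℕ in atTop, (Kpow K n x y) ^ ((n : ℝ)⁻¹) < q :=
    h.eventually (eventually_lt_nhds hq)
  have h2 : ∀ᶠ n : ℕ in atTop, 1 ≤ n := eventually_ge_atTop 1
  filter_upwards [h1, h2] with n hn1 hn2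
  have hb := YLnonneg K hnn n x y
  calc Kpow K n x y = ((Kpow K n x y) ^ ((n : ℝ)⁻¹)) ^ n :=
        (Real.rpow_inv_natCast_pow hb (by omega)).symm
    _ ≤ q ^ n := pow_le_pow_left₀ (Real.rpow_nonneg hb _) hn1.le n

lemma YLstep (hnn : ∀ x y, 0 ≤ K x y) {z a b : S}
    (hpos : ∀ᶠ n in atTop, 0 < Kpow K (n+1) z b) :
    ∀ᶠ n in atTop, Kpow K n z a * K a b ≤ Kpow K (n + 1) z b := by
  filter_upwards [hpos] with n hn
  rw [YLsucc] at hn ⊢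
  exact Summable.le_tsum (YLsummable_of_pos hn) a
    (fun v _ => mul_nonneg (YLnonneg K hnn n z v) (hnn v b))

lemma YLpeel (hnn : ∀ x y, 0 ≤ K x y) {z a b : S}
    (hposall : ∀ w, ∀ᶠ n in atTop, 0 < Kpow K n z w)
    (hreach : YLReach K a b) :
    ∃ (k : ℕ) (c : ℝ), 0 < c ∧ ∀ᶠ n in atTop, Kpow K n z a * c ≤ Kpow K (n + k) z b := by
  induction hreach using Relation.ReflTransGen.head_induction_on with
  | refl => exact ⟨0, 1, one_pos, Eventually.of_forall fun n => by simp⟩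
  | head hstep _ ih =>
    rename_i a' c' _
    obtain ⟨k, cc, hcc, hev⟩ := ih
    have hposshift : ∀ᶠ n in atTop, 0 < Kpow K (n+1) z c' :=
      (tendsto_add_atTop_nat 1).eventually (hposall c')
    have hstepev := YLstep K hnn (a := a') hposshift
    have hevshift : ∀ᶠ n in atTop, Kpow K (n+1) z c' * cc ≤ Kpow K (n+1+k) z b :=
      (tendsto_add_atTop_nat 1).eventually hev
    refine ⟨k+1, K a' c' * cc, mul_pos hstep hcc, ?_⟩
    filter_upwards [hstepev, hevshift] with n h1 h2
    have e : n + 1 + k = n + (k + 1) := by omega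
    rw [e] at h2
    calc Kpow K n z a' * (K a' c' * cc) = (Kpow K n z a' * K a' c') * cc := by ring
      _ ≤ Kpow K (n+1) z c' * cc := mul_le_mul_of_nonneg_right h1 hcc.le
      _ ≤ Kpow K (n + (k+1)) z b := h2

lemma YLdecay (hnn : ∀ x y, 0 ≤ K x y) {ρ : ℝ} (hρpos : 0 < ρ)
    (z y : S) {p : ℝ} (hp : 0 < p)
    (hslem : ∀ᶠ n in atTop, 0 < (∑' w, Kpow K n z w) ∧
      p * (∑' w, Kpow K n z w) < Kpow K n z y)
    (hupper : ∀ {q' : ℝ}, ρ < q' → ∀ᶠ n in atTop, Kpow K n z y ≤ q' ^ n)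
    {q : ℝ} (hq : ρ < q) (M : ℕ) (hM : 0 < M) :
    ∃ᶠ n in atTop, (∑' w, Kpow K (n + M) z w) ≤ q ^ M * (∑' w, Kpow K n z w) := by
  set T : ℕ → ℝ := fun n => ∑' w, Kpow K n z w with hT
  by_contra hcon
  rw [Filter.not_frequently] at hcon
  have hcon' : ∀ᶠ n in atTop, q ^ M * T n < T (n + M) := by
    filter_upwards [hcon] with n hn
    push_neg at hn
    exact hn
  set q₂ : ℝ := (ρ + q)/2 with hq₂
  have hq0 : 0 < q := lt_trans hρpos hq
  have hq₂1 : ρ < q₂ := by rw [hq₂]; linarith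
  have hq₂2 : q₂ < q := by rw [hq₂]; linarith
  have hq₂0 : 0 < q₂ := lt_trans hρpos hq₂1
  have hup := hupper hq₂1
  obtain ⟨N, hN⟩ := eventually_atTop.mp ((hcon'.and (hslem.and hup)))
  have hTN : 0 < T N := ((hN N le_rfl).2.1).1
  have grow : ∀ j : ℕ, q ^ (j*M) * T N ≤ T (N + j*M) := by
    intro j
    induction j with
    | zero => simp
    | succ j ih =>
      have h1 := (hN (N + j*M) (by omega)).1
      calc q ^ ((j+1)*M) * T N = q^M * (q^(j*M) * T N) := by
            rw [show (j+1)*M = j*M + M by ring, pow_add]; ring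
        _ ≤ q^M * T (N + j*M) :=
            mul_le_mul_of_nonneg_left ih (pow_nonneg hq0.le M)
        _ ≤ T (N + (j+1)*M) := by
            rw [show N + (j+1)*M = N + j*M + M by ring]; exact h1.le
  have bound : ∀ j : ℕ, T N ≤ (q₂^N / p) * ((q₂/q)^M)^j := by
    intro j
    have h2 := (hN (N + j*M) (by omega)).2
    have h3 : T (N + j*M) ≤ q₂^(N + j*M) / p := by
      have hle : p * T (N + j*M) ≤ q₂^(N + j*M) := le_trans h2.1.2.le h2.2
      rw [le_div_iff₀ hp]
      linarith
    have h4 : q ^ (j*M) * T N ≤ q₂^(N + j*M) / p := le_trans (grow j) h3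
    have hqpow : (0:ℝ) < q ^ (j*M) := pow_pos hq0 _
    have e1 : ((q₂/q)^M)^j = q₂^(j*M) / q^(j*M) := by
      rw [div_pow, div_pow, ← pow_mul, ← pow_mul, Nat.mul_comm M j]
    have e2 : q₂^N / p * (q₂^(j*M) / q^(j*M)) = (q₂^(N + j*M) / p) / q^(j*M) := by
      rw [pow_add]
      field_simp
    rw [e1, e2, le_div_iff₀ hqpow]
    calc T N * q^(j*M) = q^(j*M) * T N := mul_comm _ _
      _ ≤ q₂^(N+j*M)/p := h4
  have hr0 : (0:ℝ) ≤ (q₂/q)^M := pow_nonneg (div_nonneg hq₂0.le hq0.le) M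
  have hr1 : (q₂/q)^M < 1 :=
    pow_lt_one₀ (div_nonneg hq₂0.le hq0.le) ((div_lt_one hq0).2 hq₂2) (by omega)
  have htend : Tendsto (fun j : ℕ => (q₂^N / p) * ((q₂/q)^M)^j) atTop (𝓝 0) := by
    have := (tendsto_pow_atTop_nhds_zero_of_lt_one hr0 hr1).const_mul (q₂^N / p)
    simpa using this
  have : T N ≤ 0 := ge_of_tendsto htend (Eventually.of_forall bound)
  linarith

end YLHelpers

/-- If Yaglom limits exist from every state and the Jacka–Roberts ratio limit `ĥ`
exists, then `ĥ` is strictly positive and `ρ`-superharmonic. -/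
theorem hhat_superharmonic {S : Type*} [Countable S] (K : S → S → ℝ)
    (hnn : ∀ x y, 0 ≤ K x y)
    (hsub : ∀ x, ∑' y, K x y ≤ 1)
    (hirr : ∀ x y : S, ∃ n, 0 < Kpow K n x y)
    (haper : ∀ x : S, ∀ m : ℕ, (∀ n, 0 < n → 0 < Kpow K n x x → m ∣ n) → m = 1)
    (ρ : ℝ) (hρpos : 0 < ρ) (hρle : ρ ≤ 1)
    (hρ : ∀ x y : S,
      Tendsto (fun n : ℕ => (Kpow K n x y) ^ ((n : ℝ)⁻¹)) atTop (𝓝 ρ))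
    (π : S → S → ℝ) (hπnn : ∀ x y, 0 ≤ π x y) (hπ1 : ∀ x, ∑' y, π x y = 1)
    (hyag : ∀ x y : S,
      Tendsto (fun n : ℕ => Kpow K n x y / ∑' z, Kpow K n x z) atTop (𝓝 (π x y)))
    (x₀ : S) (hhat : S → ℝ) (hhat₀ : hhat x₀ = 1)
    (hJR : ∀ y : S,
      Tendsto (fun n : ℕ => (∑' z, Kpow K n y z) / (∑' z, Kpow K n x₀ z))
        atTop (𝓝 (hhat y))) :
    (∀ y, 0 < hhat y) ∧ ∀ x : S, ∑' z, K x z * hhat z ≤ ρ * hhat x := by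
  classical
  have hKnn := YLnonneg K hnn
  have hpos : ∀ x y : S, ∀ᶠ n in atTop, 0 < Kpow K n x y :=
    fun x y => YLpos_evt K hnn hρpos (hρ x y)
  -- Scheme: for every state z there is a target y carrying positive Yaglom mass,
  -- giving eventual positivity of mass and comparability of mass with a single entry.
  have hslem : ∀ z : S, ∃ y : S, ∃ p : ℝ, 0 < p ∧
      ∀ᶠ n in atTop, 0 < (∑' w, Kpow K n z w) ∧
        p * (∑' w, Kpow K n z w) < Kpow K n z y := by
    intro z
    obtain ⟨y, hy⟩ := YLexists_pos (hπnn z) (by rw [hπ1 z]; norm_num)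
    refine ⟨y, π z y / 2, by linarith, ?_⟩
    have h1 : ∀ᶠ n in atTop, π z y / 2 < Kpow K n z y / (∑' w, Kpow K n z w) :=
      (hyag z y).eventually (eventually_gt_nhds (by linarith))
    filter_upwards [h1] with n hn
    have hT0 : 0 ≤ ∑' w, Kpow K n z w := tsum_nonneg (fun w => hKnn n z w)
    rcases hT0.eq_or_lt with h0|h0
    · exfalso; rw [← h0, div_zero] at hn; linarith
    · exact ⟨h0, (lt_div_iff₀ h0).mp hn⟩
  have hdecay : ∀ z : S, ∀ M : ℕ, 0 < M → ∀ {q : ℝ}, ρ < q →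
      ∃ᶠ n in atTop, (∑' w, Kpow K (n+M) z w) ≤ q^M * (∑' w, Kpow K n z w) := by
    intro z M hM q hq
    obtain ⟨y, p, hp, hsl⟩ := hslem z
    exact YLdecay K hnn hρpos z y hp hsl (fun hq' => YLupper_evt K hnn hq' (hρ z y)) hq M hM
  -- All rows of K are summable.
  have hKsum : ∀ x, Summable (fun y => K x y) := by
    intro x
    by_contra hns
    have hunb : ∀ C : ℝ, ∃ u : Finset S, C < ∑ y ∈ u, K x y := by
      intro C
      by_contra hc
      push_neg at hc
      exact hns (summable_of_sum_le (fun y => hnn x y) hc)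
    obtain ⟨y₁, p, hp, hsl⟩ := hslem x₀
    obtain ⟨k₀, hk₀⟩ := hirr y₁ x
    have hreach : YLReach K y₁ x := YLreach_of_kpow K hnn k₀ y₁ x hk₀
    obtain ⟨k, c, hc, hpeel⟩ := YLpeel K hnn (z := x₀) (fun w => hpos x₀ w) hreach
    set q : ℝ := ρ + 1 with hqdef
    have hq : ρ < q := by rw [hqdef]; linarith
    have hfreq := hdecay x₀ (k+1) (by omega) hq
    obtain ⟨Y, hY⟩ := hunb (q^(k+1) / (c * p))
    set M := ∑ y ∈ Y, K x y with hMdef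
    have hM0 : 0 ≤ M := Finset.sum_nonneg (fun y _ => hnn x y)
    have hE3 : ∀ᶠ n in atTop, ∀ y ∈ Y, Kpow K (n+k) x₀ x * K x y ≤ Kpow K (n+k+1) x₀ y := by
      rw [eventually_all_finset]
      intro y hy
      have hp2 : ∀ᶠ n in atTop, 0 < Kpow K (n+k+1) x₀ y :=
        (tendsto_add_atTop_nat (k+1)).eventually (hpos x₀ y)
      filter_upwards [hp2] with n hn
      rw [YLsucc] at hn ⊢
      exact Summable.le_tsum (YLsummable_of_pos hn) x (fun v _ => mul_nonneg (hKnn _ _ _) (hnn v y))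
    have hTposx₀ : ∀ᶠ n in atTop, 0 < ∑' w, Kpow K n x₀ w := hsl.mono (fun n h => h.1)
    have hE4 : ∀ᶠ n in atTop,
        (∑ y ∈ Y, Kpow K (n+k+1) x₀ y) ≤ ∑' w, Kpow K (n+k+1) x₀ w := by
      have hTshift : ∀ᶠ n in atTop, 0 < ∑' w, Kpow K (n+k+1) x₀ w :=
        (tendsto_add_atTop_nat (k+1)).eventually hTposx₀
      filter_upwards [hTshift] with n hn
      exact Summable.sum_le_tsum Y (fun w _ => hKnn _ _ _) (YLsummable_of_pos hn)
    obtain ⟨n, hfr, hrest⟩ := (hfreq.and_eventually (hsl.and (hpeel.and (hE3.and hE4)))).exists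
    obtain ⟨h1, hpl, h3, h4⟩ := hrest
    have hTn : 0 < ∑' w, Kpow K n x₀ w := h1.1
    have c1 : M * (c * (p * (∑' w, Kpow K n x₀ w))) ≤ M * (c * Kpow K n x₀ y₁) :=
      mul_le_mul_of_nonneg_left (mul_le_mul_of_nonneg_left h1.2.le hc.le) hM0
    have c2 : M * (c * Kpow K n x₀ y₁) ≤ M * Kpow K (n+k) x₀ x := by
      refine mul_le_mul_of_nonneg_left ?_ hM0
      calc c * Kpow K n x₀ y₁ = Kpow K n x₀ y₁ * c := mul_comm _ _
        _ ≤ Kpow K (n+k) x₀ x := hpl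
    have c3 : M * Kpow K (n+k) x₀ x = ∑ y ∈ Y, Kpow K (n+k) x₀ x * K x y := by
      rw [hMdef, Finset.sum_mul]
      exact Finset.sum_congr rfl (fun y _ => mul_comm _ _)
    have c4 : (∑ y ∈ Y, Kpow K (n+k) x₀ x * K x y) ≤ ∑ y ∈ Y, Kpow K (n+k+1) x₀ y :=
      Finset.sum_le_sum (fun y hy => h3 y hy)
    have hfr' : (∑' w, Kpow K (n+k+1) x₀ w) ≤ q^(k+1) * ∑' w, Kpow K n x₀ w := hfr
    have hchain : M * (c * (p * (∑' w, Kpow K n x₀ w))) ≤ q^(k+1) * ∑' w, Kpow K n x₀ w := by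
      calc M * (c * (p * (∑' w, Kpow K n x₀ w))) ≤ M * (c * Kpow K n x₀ y₁) := c1
        _ ≤ M * Kpow K (n+k) x₀ x := c2
        _ = ∑ y ∈ Y, Kpow K (n+k) x₀ x * K x y := c3
        _ ≤ ∑ y ∈ Y, Kpow K (n+k+1) x₀ y := c4
        _ ≤ ∑' w, Kpow K (n+k+1) x₀ w := h4
        _ ≤ q^(k+1) * ∑' w, Kpow K n x₀ w := hfr'
    have hMle : M * (c * p) ≤ q^(k+1) := by
      have h := (mul_le_mul_iff_of_pos_right hTn).mpr (le_refl (0:ℝ))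
      nlinarith [hchain, hTn]
    have : M ≤ q^(k+1) / (c * p) := (le_div_iff₀ (mul_pos hc hp)).2 hMle
    linarith
  have hK1 : ∀ v y, K v y ≤ 1 :=
    fun v y => le_trans (Summable.le_tsum (hKsum v) y (fun w _ => hnn v w)) (hsub v)
  -- Rows of all powers are summable with total mass at most one.
  have hrow : ∀ (n : ℕ) (x : S), Summable (fun y => Kpow K n x y) ∧ (∑' y, Kpow K n x y) ≤ 1 := by
    intro n
    induction n with
    | zero =>
      intro x
      constructor
      · apply summable_of_ne_finset_zero (s := {x})
        intro b hb
        show (if x = b then (1:ℝ) else 0) = 0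
        rw [if_neg (fun h => (Finset.notMem_singleton.mp hb) h.symm)]
      · have : (∑' y, Kpow K 0 x y) = 1 := by
          rw [tsum_eq_single x (fun b hb => by
            show (if x = b then (1:ℝ) else 0) = 0
            rw [if_neg (fun h => hb h.symm)])]
          show (if x = x then (1:ℝ) else 0) = 1
          rw [if_pos rfl]
        rw [this]
    | succ n ih =>
      intro x
      obtain ⟨Sa, hTa⟩ := ih x
      have hPnn : ∀ pr : S × S, 0 ≤ Kpow K n x pr.1 * K pr.1 pr.2 :=
        fun pr => mul_nonneg (hKnn n x pr.1) (hnn pr.1 pr.2)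
      have hP : Summable (fun pr : S × S => Kpow K n x pr.1 * K pr.1 pr.2) := by
        rw [summable_prod_of_nonneg hPnn]
        constructor
        · intro v
          show Summable fun y => Kpow K n x v * K v y
          exact (hKsum v).mul_left _
        · apply Summable.of_nonneg_of_le
            (fun v => tsum_nonneg (fun y => mul_nonneg (hKnn n x v) (hnn v y)))
            (fun v => ?_) Sa
          calc (∑' y, Kpow K n x v * K v y) = Kpow K n x v * ∑' y, K v y := tsum_mul_left
            _ ≤ Kpow K n x v := mul_le_of_le_one_right (hKnn n x v) (hsub v)
      have hPs : Summable (fun pr : S × S => Kpow K n x pr.2 * K pr.2 pr.1) := hP.prod_symm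
      have hcomp := (summable_prod_of_nonneg
        (fun pr : S × S => mul_nonneg (hKnn n x pr.2) (hnn pr.2 pr.1))).mp hPs
      have hrowsum : Summable (fun y => Kpow K (n+1) x y) :=
        (summable_congr (fun y => YLsucc K n x y)).mpr hcomp.2
      refine ⟨hrowsum, ?_⟩
      have hmarg : Summable (fun v => ∑' y, Kpow K n x v * K v y) :=
        ((summable_prod_of_nonneg hPnn).mp hP).2
      have hswap : (∑' y, Kpow K (n+1) x y) = ∑' v, ∑' y, Kpow K n x v * K v y := by
        rw [tsum_congr (fun y => YLsucc K n x y)]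
        exact Summable.tsum_comm' hP (fun v => (hKsum v).mul_left _)
          (fun y => hcomp.1 y)
      calc (∑' y, Kpow K (n+1) x y) = ∑' v, ∑' y, Kpow K n x v * K v y := hswap
        _ = ∑' v, Kpow K n x v * ∑' y, K v y := tsum_congr (fun v => tsum_mul_left)
        _ ≤ ∑' v, Kpow K n x v := by
            apply Summable.tsum_le_tsum (fun v => mul_le_of_le_one_right (hKnn n x v) (hsub v)) _ Sa
            exact (summable_congr (fun v => tsum_mul_left)).mp hmarg
        _ ≤ 1 := hTa
  have hentry1 : ∀ (n : ℕ) (z y : S), Kpow K n z y ≤ 1 :=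
    fun n z y => le_trans (Summable.le_tsum (hrow n z).1 y (fun w _ => hKnn n z w)) (hrow n z).2
  have hLRsummable : ∀ (n : ℕ) (x y : S), Summable (fun z => K x z * Kpow K n z y) :=
    fun n x y => Summable.of_nonneg_of_le (fun z => mul_nonneg (hnn x z) (hKnn n z y))
      (fun z => mul_le_of_le_one_right (hnn x z) (hentry1 n z y)) (hKsum x)
  -- Left recursion (first-step decomposition).
  have hLR : ∀ (x : S) (n : ℕ) (y : S), Kpow K (n+1) x y = ∑' z, K x z * Kpow K n z y := by
    intro x n
    induction n with
    | zero =>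
      intro y
      rw [YLone]
      symm
      rw [tsum_eq_single y (fun b hb => by
        show K x b * Kpow K 0 b y = 0
        have : Kpow K 0 b y = 0 := by
          show (if b = y then (1:ℝ) else 0) = 0
          rw [if_neg hb]
        rw [this, mul_zero])]
      show K x y * Kpow K 0 y y = K x y
      have : Kpow K 0 y y = 1 := by
        show (if y = y then (1:ℝ) else 0) = 1
        rw [if_pos rfl]
      rw [this, mul_one]
    | succ n ih =>
      intro y
      have hf2nn : ∀ pr : S × S, 0 ≤ K x pr.1 * Kpow K n pr.1 pr.2 * K pr.2 y :=
        fun pr => mul_nonneg (mul_nonneg (hnn x pr.1) (hKnn n pr.1 pr.2)) (hnn pr.2 y)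
      have hinner : ∀ z, (∑' v, K x z * Kpow K n z v * K v y) = K x z * Kpow K (n+1) z y := by
        intro z
        calc (∑' v, K x z * Kpow K n z v * K v y)
            = ∑' v, K x z * (Kpow K n z v * K v y) := tsum_congr (fun v => by ring)
          _ = K x z * ∑' v, Kpow K n z v * K v y := tsum_mul_left
          _ = K x z * Kpow K (n+1) z y := by rw [← YLsucc]
      have hmarg2 : Summable (fun z => ∑' v, K x z * Kpow K n z v * K v y) :=
        (summable_congr hinner).mpr (hLRsummable (n+1) x y)
      have hrows2 : ∀ z, Summable (fun v => K x z * Kpow K n z v * K v y) := by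
        intro z
        apply Summable.of_nonneg_of_le
          (fun v => mul_nonneg (mul_nonneg (hnn x z) (hKnn n z v)) (hnn v y))
          (fun v => mul_le_of_le_one_right (mul_nonneg (hnn x z) (hKnn n z v)) (hK1 v y))
        exact (hrow n z).1.mul_left (K x z)
      have hcols2 : ∀ v, Summable (fun z => K x z * Kpow K n z v * K v y) := by
        intro v
        apply Summable.of_nonneg_of_le
          (fun z => mul_nonneg (mul_nonneg (hnn x z) (hKnn n z v)) (hnn v y))
          (fun z => ?_) ((hKsum x).mul_right (K v y))
        exact mul_le_mul_of_nonneg_right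
          (mul_le_of_le_one_right (hnn x z) (hentry1 n z v)) (hnn v y)
      have hG : Summable (fun pr : S × S => K x pr.1 * Kpow K n pr.1 pr.2 * K pr.2 y) := by
        rw [summable_prod_of_nonneg hf2nn]
        exact ⟨hrows2, hmarg2⟩
      calc Kpow K (n+1+1) x y
          = ∑' v, Kpow K (n+1) x v * K v y := YLsucc K (n+1) x y
        _ = ∑' v, (∑' z, K x z * Kpow K n z v) * K v y :=
            tsum_congr (fun v => by rw [ih v])
        _ = ∑' v, ∑' z, K x z * Kpow K n z v * K v y :=
            tsum_congr (fun v => (tsum_mul_right).symm)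
        _ = ∑' z, ∑' v, K x z * Kpow K n z v * K v y :=
            Summable.tsum_comm' hG hrows2 hcols2
        _ = ∑' z, K x z * Kpow K (n+1) z y := tsum_congr hinner
  -- the key finite first-step inequality
  have hA : ∀ (x : S) (n : ℕ) (F : Finset S),
      (∑ z ∈ F, K x z * ∑' w, Kpow K n z w) ≤ ∑' w, Kpow K (n+1) x w := by
    intro x n F
    have hunn : ∀ pr : S × S, 0 ≤ K x pr.1 * Kpow K n pr.1 pr.2 :=
      fun pr => mul_nonneg (hnn x pr.1) (hKnn n pr.1 pr.2)
    have hrows : ∀ z, Summable (fun y => K x z * Kpow K n z y) :=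
      fun z => (hrow n z).1.mul_left (K x z)
    have hmargeq : ∀ z, (∑' y, K x z * Kpow K n z y) = K x z * ∑' y, Kpow K n z y :=
      fun z => tsum_mul_left
    have hTsummable : Summable (fun z => K x z * ∑' w, Kpow K n z w) :=
      Summable.of_nonneg_of_le
        (fun z => mul_nonneg (hnn x z) (tsum_nonneg (fun w => hKnn n z w)))
        (fun z => mul_le_of_le_one_right (hnn x z) (hrow n z).2) (hKsum x)
    have hmarg : Summable (fun z => ∑' y, K x z * Kpow K n z y) :=
      (summable_congr hmargeq).mpr hTsummable
    have hU : Summable (fun pr : S × S => K x pr.1 * Kpow K n pr.1 pr.2) := by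
      rw [summable_prod_of_nonneg hunn]
      exact ⟨hrows, hmarg⟩
    have hswap : (∑' y, Kpow K (n+1) x y) = ∑' z, K x z * ∑' y, Kpow K n z y := by
      calc (∑' y, Kpow K (n+1) x y)
          = ∑' y, ∑' z, K x z * Kpow K n z y := tsum_congr (fun y => hLR x n y)
        _ = ∑' z, ∑' y, K x z * Kpow K n z y :=
            Summable.tsum_comm' hU hrows (fun y => hLRsummable n x y)
        _ = ∑' z, K x z * ∑' y, Kpow K n z y := tsum_congr hmargeq
    rw [hswap]
    exact Summable.sum_le_tsum F
      (fun z _ => mul_nonneg (hnn x z) (tsum_nonneg (fun w => hKnn n z w))) hTsummable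
  -- limits along frequently-satisfied inequalities
  have hfreqle : ∀ {a b : ℕ → ℝ} {A B : ℝ}, Tendsto a atTop (𝓝 A) →
      Tendsto b atTop (𝓝 B) → (∃ᶠ n in atTop, a n ≤ b n) → A ≤ B := by
    intro a b A B ha hb hfreq
    by_contra hAB
    push_neg at hAB
    have e1 : ∀ᶠ n in atTop, (A+B)/2 < a n :=
      ha.eventually (eventually_gt_nhds (by linarith))
    have e2 : ∀ᶠ n in atTop, b n < (A+B)/2 :=
      hb.eventually (eventually_lt_nhds (by linarith))
    obtain ⟨n, h1, h2, h3⟩ := (hfreq.and_eventually (e1.and e2)).exists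
    linarith
  have hhnn : ∀ y, 0 ≤ hhat y := fun y =>
    ge_of_tendsto (hJR y) (Eventually.of_forall fun n =>
      div_nonneg (tsum_nonneg fun w => hKnn n y w) (tsum_nonneg fun w => hKnn n x₀ w))
  -- the key superharmonicity inequality over finite sets
  have hKEY : ∀ (x : S) (F : Finset S), (∑ z ∈ F, K x z * hhat z) ≤ ρ * hhat x := by
    intro x F
    have hεbound : ∀ ε : ℝ, 0 < ε → (∑ z ∈ F, K x z * hhat z) ≤ hhat x * (ρ + ε) := by
      intro ε hε
      have hq : ρ < ρ + ε := by linarith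
      have hfreq := hdecay x₀ 1 one_pos hq
      obtain ⟨y₁, p, hp, hsl⟩ := hslem x₀
      have hTpos : ∀ᶠ n in atTop, 0 < ∑' w, Kpow K n x₀ w := hsl.mono (fun n h => h.1)
      have hTpos1 : ∀ᶠ n in atTop, 0 < ∑' w, Kpow K (n+1) x₀ w :=
        (tendsto_add_atTop_nat 1).eventually hTpos
      have ha : Tendsto (fun n => ∑ z ∈ F, K x z *
          ((∑' w, Kpow K n z w) / (∑' w, Kpow K n x₀ w))) atTop
          (𝓝 (∑ z ∈ F, K x z * hhat z)) :=
        tendsto_finset_sum F (fun z _ => (hJR z).const_mul (K x z))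
      have hb : Tendsto (fun n => ((∑' w, Kpow K (n+1) x w) / (∑' w, Kpow K (n+1) x₀ w))
          * (ρ+ε)) atTop (𝓝 (hhat x * (ρ+ε))) :=
        ((hJR x).comp (tendsto_add_atTop_nat 1)).mul_const (ρ+ε)
      apply hfreqle ha hb
      apply Frequently.mono (hfreq.and_eventually (hTpos.and hTpos1))
      rintro n ⟨hdec, hT0, hT1⟩
      rw [pow_one] at hdec
      have step1 : (∑ z ∈ F, K x z * ((∑' w, Kpow K n z w) / (∑' w, Kpow K n x₀ w)))
          = (∑ z ∈ F, K x z * (∑' w, Kpow K n z w)) / (∑' w, Kpow K n x₀ w) := by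
        rw [Finset.sum_div]
        exact Finset.sum_congr rfl (fun z _ => (mul_div_assoc _ _ _).symm)
      have step2 : (∑ z ∈ F, K x z * (∑' w, Kpow K n z w)) / (∑' w, Kpow K n x₀ w)
          ≤ (∑' w, Kpow K (n+1) x w) / (∑' w, Kpow K n x₀ w) :=
        (div_le_div_iff_of_pos_right hT0).mpr (hA x n F)
      have step3 : (∑' w, Kpow K (n+1) x w) / (∑' w, Kpow K n x₀ w)
          = ((∑' w, Kpow K (n+1) x w) / (∑' w, Kpow K (n+1) x₀ w))
            * ((∑' w, Kpow K (n+1) x₀ w) / (∑' w, Kpow K n x₀ w)) := by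
        rw [div_mul_div_comm, mul_comm (∑' w, Kpow K (n+1) x₀ w) (∑' w, Kpow K n x₀ w)]
        rw [mul_div_mul_right _ _ (ne_of_gt hT1)]
      have step4 : ((∑' w, Kpow K (n+1) x w) / (∑' w, Kpow K (n+1) x₀ w))
            * ((∑' w, Kpow K (n+1) x₀ w) / (∑' w, Kpow K n x₀ w))
          ≤ ((∑' w, Kpow K (n+1) x w) / (∑' w, Kpow K (n+1) x₀ w)) * (ρ+ε) := by
        apply mul_le_mul_of_nonneg_left _
          (div_nonneg (tsum_nonneg fun w => hKnn (n+1) x w) hT1.le)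
        rw [div_le_iff₀ hT0]
        linarith
      calc (∑ z ∈ F, K x z * ((∑' w, Kpow K n z w) / (∑' w, Kpow K n x₀ w)))
          = (∑ z ∈ F, K x z * (∑' w, Kpow K n z w)) / (∑' w, Kpow K n x₀ w) := step1
        _ ≤ (∑' w, Kpow K (n+1) x w) / (∑' w, Kpow K n x₀ w) := step2
        _ = ((∑' w, Kpow K (n+1) x w) / (∑' w, Kpow K (n+1) x₀ w))
            * ((∑' w, Kpow K (n+1) x₀ w) / (∑' w, Kpow K n x₀ w)) := step3
        _ ≤ ((∑' w, Kpow K (n+1) x w) / (∑' w, Kpow K (n+1) x₀ w)) * (ρ+ε) := step4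
    apply le_of_forall_pos_le_add
    intro δ hδ
    have hd1 : (0:ℝ) < hhat x + 1 := by linarith [hhnn x]
    have hε : 0 < δ / (hhat x + 1) := div_pos hδ hd1
    have h1 := hεbound _ hε
    have h2 : hhat x * (ρ + δ/(hhat x + 1)) = ρ * hhat x + (hhat x/(hhat x+1)) * δ := by
      field_simp
    have h3 : (hhat x/(hhat x+1)) * δ ≤ δ := by
      have hle1 : hhat x/(hhat x+1) ≤ 1 := by
        rw [div_le_one hd1]; linarith
      nlinarith [hδ.le, div_nonneg (hhnn x) hd1.le]
    rw [h2] at h1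
    linarith
  -- positivity of hhat
  have hsingle : ∀ w z, K w z * hhat z ≤ ρ * hhat w := by
    intro w z
    have := hKEY w {z}
    simpa using this
  have hhpos : ∀ y, 0 < hhat y := by
    have main : ∀ a, YLReach K a x₀ → 0 < hhat a := by
      intro a h
      induction h using Relation.ReflTransGen.head_induction_on with
      | refl => rw [hhat₀]; norm_num
      | head hstep htail ih =>
        rename_i a' c'
        have h1 : 0 < K a' c' * hhat c' := mul_pos hstep ih
        have h2 := hsingle a' c'
        have h3 : 0 < ρ * hhat a' := lt_of_lt_of_le h1 h2
        nlinarith [hρpos, hhnn a']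
    intro y
    obtain ⟨k₀, hk₀⟩ := hirr y x₀
    exact main y (YLreach_of_kpow K hnn k₀ y x₀ hk₀)
  exact ⟨hhpos, fun x => tsum_le_of_sum_le' (mul_nonneg hρpos.le (hhnn x)) (fun F => hKEY x F)⟩
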